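/- For a² > 2, the function Φ(φ) = -sin φ - (a²/4) sin 2φ restricted to (π/2, 3π/2) has exactly two critical points, namely arccos(λ₂) and 2π - arccos(λ₂) with λ₂ = (-1 - √(1 + 2a⁴))/(2a²), and Φ is positive at the first and negative at the second. -/

import Mathlib

open Real

theorem exactly_two_critical_points (a : ℝ) (ha : 2 < a^2)
    (Φ : ℝ → ℝ) (hΦ : ∀ φ, Φ φ = -Real.sin φ - (a^2/4) * Real.sin (2*φ))
    (lam2 : ℝ) (h2 : lam2 = (-1 - Real.sqrt (1 + 2*a^4)) / (2*a^2)) :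
    (∀ φ ∈ Set.Ioo (π/2) (3*π/2),
      (deriv Φ φ = 0 ↔ φ = Real.arccos lam2 ∨ φ = 2*π - Real.arccos lam2)) ∧
    0 < Φ (Real.arccos lam2) ∧ Φ (2*π - Real.arccos lam2) < 0 := by
  have ha0 : (0:ℝ) < a^2 := by linarith
  set s : ℝ := Real.sqrt (1 + 2*a^4) with hs
  have hs0 : 0 ≤ s := Real.sqrt_nonneg _
  have hs2 : s^2 = 1 + 2*a^4 := Real.sq_sqrt (by nlinarith)
  have ha4 : 4 < a^4 := by nlinarith
  have hs3 : 3 < s := by nlinarith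
  have hl2 : lam2 * (2*a^2) = -1 - s := by
    rw [h2]; exact div_mul_cancel₀ _ (ne_of_gt (by linarith))
  -- lam2 bounds
  have hslt : s < 2*a^2 - 1 := by nlinarith
  have hlam_neg : lam2 < 0 := by nlinarith
  have hlam_gt : -1 < lam2 := by nlinarith
  have hlam_le1 : lam2 ≤ 1 := by linarith
  have hlam_ge : -1 ≤ lam2 := le_of_lt hlam_gt
  -- arccos facts
  set θ := Real.arccos lam2 with hθ
  have hcosθ : Real.cos θ = lam2 := Real.cos_arccos hlam_ge hlam_le1
  have hθlepi : θ ≤ π := Real.arccos_le_pi lam2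
  have hθltpi : θ < π := by
    rcases lt_or_eq_of_le hθlepi with h | h
    · exact h
    · exfalso; rw [h, Real.cos_pi] at hcosθ; linarith
  have hθgt : π/2 < θ := by
    rw [hθ, Real.arccos_eq_pi_div_two_sub_arcsin]
    have : Real.arcsin lam2 < 0 := by
      have := Real.arcsin_pos (x := -lam2) |>.mpr (by linarith)
      rw [Real.arcsin_neg] at this; linarith
    linarith
  have hθpos : 0 < θ := by nlinarith [Real.pi_pos]
  have hsinθ : 0 < Real.sin θ := Real.sin_pos_of_pos_of_lt_pi hθpos hθltpi
  -- derivative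
  have hderiv : ∀ φ : ℝ, deriv Φ φ = -Real.cos φ - a^2/2 * Real.cos (2*φ) := by
    have hfun : Φ = fun φ => -Real.sin φ - a^2/4 * Real.sin (2*φ) := funext hΦ
    intro φ
    have h1 : HasDerivAt (fun x : ℝ => Real.sin (2*x)) (Real.cos (2*φ) * 2) φ := by
      have h2x : HasDerivAt (fun x : ℝ => 2*x) 2 φ := by
        simpa using (hasDerivAt_id φ).const_mul 2
      exact (Real.hasDerivAt_sin (2*φ)).comp φ h2x
    have h2' : HasDerivAt (fun x : ℝ => -Real.sin x - a^2/4 * Real.sin (2*x))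
        (-Real.cos φ - a^2/4 * (Real.cos (2*φ) * 2)) φ :=
      ((Real.hasDerivAt_sin φ).neg).sub (h1.const_mul (a^2/4))
    rw [hfun, h2'.deriv]; ring
  have key14 : 1 + a^2/2 * lam2 < 0 := by nlinarith
  constructor
  · intro φ hφ
    obtain ⟨hφ1, hφ2⟩ := hφ
    have hpi := Real.pi_pos
    have hcosneg : Real.cos φ < 0 :=
      Real.cos_neg_of_pi_div_two_lt_of_lt hφ1 (by linarith)
    constructor
    · intro hd
      rw [hderiv φ, Real.cos_two_mul] at hd
      set c := Real.cos φ with hc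
      have heq2 : 4*a^4*c^2 + 4*a^2*c - 2*a^4 = 0 := by
        linear_combination (-4*a^2) * hd
      have hfac : (2*a^2*c + 1 - s) * (2*a^2*c + 1 + s) = 0 := by
        linear_combination heq2 - hs2
      have hcl : c = lam2 := by
        rcases mul_eq_zero.mp hfac with h | h
        · exfalso; nlinarith
        · have : c * (2*a^2) = -1 - s := by linarith
          have := this.trans hl2.symm
          exact mul_right_cancel₀ (by positivity) this
      -- now cos φ = lam2
      by_cases hle : φ ≤ π
      · left
        exact Real.injOn_cos ⟨by linarith, hle⟩ ⟨by linarith, hθlepi⟩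
          (by rw [hcosθ]; exact hcl)
      · right
        push_neg at hle
        have hmem : 2*π - φ ∈ Set.Icc 0 π := ⟨by linarith, by linarith⟩
        have hcos' : Real.cos (2*π - φ) = Real.cos θ := by
          rw [Real.cos_sub, Real.cos_two_pi, Real.sin_two_pi, hcosθ]
          simpa using hcl
        have := Real.injOn_cos hmem ⟨by linarith, hθlepi⟩ hcos'
        linarith
    · intro hd
      rw [hderiv φ, Real.cos_two_mul]
      have hcl : Real.cos φ = lam2 := by
        rcases hd with rfl | rfl
        · exact hcosθ
        · rw [Real.cos_sub, Real.cos_two_pi, Real.sin_two_pi]; simpa using hcosθ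
      rw [hcl]
      have h4 : (4*a^2) * (-lam2 - a^2/2*(2*lam2^2-1)) = 0 := by
        linear_combination (s - 1 - 2*a^2*lam2) * hl2 - hs2
      have := (mul_eq_zero.mp h4).resolve_left (by positivity)
      linarith
  · constructor
    · rw [hΦ θ, Real.sin_two_mul, hcosθ]
      nlinarith [mul_pos hsinθ (neg_pos.mpr key14)]
    · rw [hΦ (2*π - θ), Real.sin_two_mul]
      have hsθ' : Real.sin (2*π - θ) = -Real.sin θ := by
        rw [Real.sin_sub, Real.sin_two_pi, Real.cos_two_pi]; ring
      have hcθ' : Real.cos (2*π - θ) = lam2 := by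
        rw [Real.cos_sub, Real.cos_two_pi, Real.sin_two_pi, hcosθ]; ring
      rw [hsθ', hcθ']
      nlinarith [mul_neg_of_pos_of_neg hsinθ key14]
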